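/- Let p ≥ 3 be prime, θ, α ∈ ℚ_p with |θ − 1|_p ≤ 1/p, |α|_p = 1, |1 − α|_p ≤ 1/p, and let λ be a weight with λ(0) = 1, λ(1) = α, |λ(i)|_p < 1 for i ≥ 2, |λ(i)|_p → 0, δ := max_{i≥2}|λ(i)|_p > 0. Then F⁺ maps B_δ into B_δ; more precisely, for every x ∈ B_δ one has |(F⁺(x))_i|_p = |λ(i)|_p ≤ δ for all i ≥ 2. -/

import Mathlib

open Filter

private lemma padic_small_add_four (p : ℕ) [Fact p.Prime] (hp : 3 ≤ p)
    (E : ℚ_[p]) (hE : ‖E‖ < 1) : ‖E + 4‖ = 1 := by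
  have h4 : ‖(4 : ℚ_[p])‖ = 1 := by
    have hpp : Nat.Prime p := Fact.out
    have hnd : ¬ p ∣ 4 := by
      intro h
      have h4 := Nat.le_of_dvd (by norm_num) h
      interval_cases p
      · exact absurd h (by norm_num)
      · exact absurd hpp (by norm_num)
    have : ¬ (p : ℤ) ∣ (4 : ℤ) := by exact_mod_cast hnd
    have hlt := (Padic.norm_intCast_lt_one_iff (p := p) (k := (4 : ℤ))).not.mpr (by exact_mod_cast this)
    have hle : ‖((4 : ℤ) : ℚ_[p])‖ ≤ 1 := Padic.norm_int_le_one _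
    push_neg at hlt
    have : ‖((4 : ℤ) : ℚ_[p])‖ = 1 := le_antisymm hle hlt
    simpa using this
  have hne : ‖E‖ ≠ ‖(4 : ℚ_[p])‖ := by rw [h4]; exact ne_of_lt hE
  rw [Padic.add_eq_max_of_ne hne, h4]
  exact max_eq_right hE.le

/-- Under the conditions `|θ-1|_p ≤ 1/p`, `|α|_p = 1`,
`|1-α|_p ≤ 1/p` on the parameters, and with a weight `λ` satisfying
`λ(0) = 1`, `λ(1) = α`, `|λ(i)|_p < 1` for `i ≥ 2`, `|λ(i)|_p → 0`, and
`δ = max_{i≥2} |λ(i)|_p > 0`, the map `F⁺` sends the ball `B_δ` into itself;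
more precisely, for every `x ∈ B_δ` one has `|(F⁺(x))_i|_p = |λ(i)|_p ≤ δ`
for all `i ≥ 2`.  Here `X = Σ_{j≥2} x_j`, and `s_X` is the square root of
`D_X = (X + θ(1-α))² + 4α(X+1)` with `|s_X - 2|_p < 1`, and
`(F⁺(x))_i = λ(i)(2(θ-1)x_i + (α-1)θ + X + s_X + 2)/((α+1)θ + X + s_X)`. -/
theorem potts_Fplus_maps_ball (p : ℕ) [Fact p.Prime] (hp : 3 ≤ p)
    (θ α : ℚ_[p]) (hθ : ‖θ - 1‖ ≤ 1 / (p : ℝ)) (hα : ‖α‖ = 1)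
    (hα1 : ‖1 - α‖ ≤ 1 / (p : ℝ))
    (L : ℕ → ℚ_[p]) (hL0 : L 0 = 1) (hL1 : L 1 = α)
    (hLlt : ∀ i, 2 ≤ i → ‖L i‖ < 1)
    (hLten : Tendsto (fun i => ‖L i‖) atTop (nhds 0))
    (δ : ℝ) (hδpos : 0 < δ)
    (hδub : ∀ i, 2 ≤ i → ‖L i‖ ≤ δ) (hδmax : ∃ i, 2 ≤ i ∧ ‖L i‖ = δ)
    (x : ℕ → ℚ_[p])
    (hxten : Tendsto (fun i => ‖x i‖) atTop (nhds 0))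
    (hxB : ∀ i, 2 ≤ i → ‖x i‖ ≤ δ)
    (X : ℚ_[p]) (hX : X = ∑' j : ℕ, x (j + 2))
    (sX : ℚ_[p]) (hsX : sX ^ 2 = (X + θ * (1 - α)) ^ 2 + 4 * α * (X + 1))
    (hsX2 : ‖sX - 2‖ < 1) :
    ∀ i, 2 ≤ i →
      ‖L i * ((2 * (θ - 1) * x i + (α - 1) * θ + X + sX + 2) /
          ((α + 1) * θ + X + sX))‖ = ‖L i‖ ∧ ‖L i‖ ≤ δ := by
  -- basic facts
  have hp1 : (1 : ℝ) < p := by exact_mod_cast lt_of_lt_of_le (by norm_num) hp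
  have hinv : (1 : ℝ) / p < 1 := by
    rw [div_lt_one (by linarith)]; linarith
  have hδlt1 : δ < 1 := by
    obtain ⟨i, hi2, hiδ⟩ := hδmax
    exact hiδ ▸ hLlt i hi2
  have hXle : ‖X‖ ≤ δ := by
    rw [hX]
    exact IsUltrametricDist.norm_tsum_le_of_forall_le_of_nonneg hδpos.le
      (fun j => hxB (j + 2) (by omega))
  have hθn : ‖θ‖ ≤ 1 := by
    have : θ = (θ - 1) + 1 := by ring
    rw [this]
    refine le_trans (Padic.nonarchimedean _ _) ?_
    simp only [norm_one, max_le_iff]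
    exact ⟨le_trans hθ hinv.le, le_refl 1⟩
  have hα1' : ‖α - 1‖ ≤ 1 / p := by
    have : α - 1 = -(1 - α) := by ring
    rw [this, norm_neg]; exact hα1
  have hαp1 : ‖α + 1‖ ≤ 1 := by
    refine le_trans (Padic.nonarchimedean _ _) ?_
    simp [hα]
  intro i hi
  have hxi : ‖x i‖ ≤ δ := hxB i hi
  -- numerator
  have hnum : ‖2 * (θ - 1) * x i + (α - 1) * θ + X + sX + 2‖ = 1 := by
    have hE : ‖2 * (θ - 1) * x i + (α - 1) * θ + X + (sX - 2)‖ < 1 := by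
      refine lt_of_le_of_lt (Padic.nonarchimedean _ _) (max_lt ?_ hsX2)
      refine lt_of_le_of_lt (Padic.nonarchimedean _ _) (max_lt ?_ (lt_of_le_of_lt hXle hδlt1))
      refine lt_of_le_of_lt (Padic.nonarchimedean _ _) (max_lt ?_ ?_)
      · calc ‖2 * (θ - 1) * x i‖ = ‖(2:ℚ_[p])‖ * ‖θ - 1‖ * ‖x i‖ := by
              rw [norm_mul, norm_mul]
          _ ≤ 1 * (1 / p) * δ := by
              refine mul_le_mul (mul_le_mul ?_ hθ (norm_nonneg _) ?_) hxi (norm_nonneg _) ?_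
              · exact_mod_cast Padic.norm_int_le_one (2 : ℤ)
              · norm_num
              · positivity
          _ < 1 := by
              rw [one_mul]
              nlinarith [hδpos, hδlt1, hinv, div_pos (one_pos) (lt_trans one_pos hp1 : (0:ℝ) < p)]
      · calc ‖(α - 1) * θ‖ = ‖α - 1‖ * ‖θ‖ := norm_mul _ _
          _ ≤ (1 / p) * 1 := mul_le_mul hα1' hθn (norm_nonneg _) (by positivity)
          _ < 1 := by rw [mul_one]; exact hinv
    have heq : 2 * (θ - 1) * x i + (α - 1) * θ + X + sX + 2
        = (2 * (θ - 1) * x i + (α - 1) * θ + X + (sX - 2)) + 4 := by ring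
    rw [heq]
    exact padic_small_add_four p hp _ hE
  -- denominator
  have hden : ‖(α + 1) * θ + X + sX‖ = 1 := by
    have hE : ‖(α + 1) * (θ - 1) + (α - 1) + X + (sX - 2)‖ < 1 := by
      refine lt_of_le_of_lt (Padic.nonarchimedean _ _) (max_lt ?_ hsX2)
      refine lt_of_le_of_lt (Padic.nonarchimedean _ _) (max_lt ?_ (lt_of_le_of_lt hXle hδlt1))
      refine lt_of_le_of_lt (Padic.nonarchimedean _ _) (max_lt ?_ (lt_of_le_of_lt hα1' hinv))
      calc ‖(α + 1) * (θ - 1)‖ = ‖α + 1‖ * ‖θ - 1‖ := norm_mul _ _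
        _ ≤ 1 * (1 / p) := mul_le_mul hαp1 hθ (norm_nonneg _) (by norm_num)
        _ < 1 := by rw [one_mul]; exact hinv
    have heq : (α + 1) * θ + X + sX
        = ((α + 1) * (θ - 1) + (α - 1) + X + (sX - 2)) + 4 := by ring
    rw [heq]
    exact padic_small_add_four p hp _ hE
  refine ⟨?_, hδub i hi⟩
  rw [norm_mul, norm_div, hnum, hden]
  simp
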